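/- Let {b_k} be a nondecreasing sequence with b_k ∈ [0,1] and b_0 > 0 (and b_k bounded away from 1 is not assumed), and let n ≥ 2. Then ∑_{k=0}^∞ ∏_{s=k(n-1)}^{(k+1)(n-1)-1} b_s(1-b_s) = ∞ if and only if ∑_{s=0}^∞ (1-b_s)^{n-1} = ∞. -/

import Mathlib

lemma block_sum_eq (f : ℕ → ℝ) (m : ℕ) (K : ℕ) :
    ∑ k ∈ Finset.range K, (∑ s ∈ Finset.Ico (k * m) ((k + 1) * m), f s)
      = ∑ s ∈ Finset.range (K * m), f s := by
  induction K with
  | zero => simp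
  | succ K ih =>
    rw [Finset.sum_range_succ, ih, Finset.range_eq_Ico, Finset.range_eq_Ico]
    exact Finset.sum_Ico_consecutive f (Nat.zero_le _)
      (Nat.mul_le_mul_right m (Nat.le_succ K))

lemma block_summable_iff {f : ℕ → ℝ} (hf : ∀ s, 0 ≤ f s) {m : ℕ} (hm : 1 ≤ m) :
    Summable f ↔ Summable (fun k => ∑ s ∈ Finset.Ico (k * m) ((k + 1) * m), f s) := by
  constructor
  · intro h
    apply summable_of_sum_range_le (c := ∑' s, f s)
      (fun k => Finset.sum_nonneg fun s _ => hf s)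
    intro K
    rw [block_sum_eq]
    exact Summable.sum_le_tsum _ (fun i _ => hf i) h
  · intro h
    apply summable_of_sum_range_le
      (c := ∑' k, ∑ s ∈ Finset.Ico (k * m) ((k + 1) * m), f s) hf
    intro N
    calc ∑ s ∈ Finset.range N, f s
        ≤ ∑ s ∈ Finset.range (N * m), f s :=
          Finset.sum_le_sum_of_subset_of_nonneg
            (Finset.range_subset_range.mpr (Nat.le_mul_of_pos_right N (by omega)))
            (fun i _ _ => hf i)
      _ = ∑ k ∈ Finset.range N, (∑ s ∈ Finset.Ico (k * m) ((k + 1) * m), f s) :=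
          (block_sum_eq f m N).symm
      _ ≤ _ := Summable.sum_le_tsum _ (fun i _ => Finset.sum_nonneg fun s _ => hf s) h

/-- Lemma 2(ii): for a nondecreasing sequence `b_k ∈ [0,1]` with `b_0 > 0` and `n ≥ 2`,
`∑_k ∏_{s=k(n-1)}^{(k+1)(n-1)-1} b_s (1-b_s) = ∞` iff `∑_s (1-b_s)^{n-1} = ∞`. -/
theorem stmt_12 (n : ℕ) (hn : 2 ≤ n) (b : ℕ → ℝ) (hmono : Monotone b)
    (hb : ∀ k, b k ∈ Set.Icc (0 : ℝ) 1) (hb0 : 0 < b 0) :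
    ¬ Summable (fun k => ∏ s ∈ Finset.Ico (k * (n - 1)) ((k + 1) * (n - 1)),
        b s * (1 - b s)) ↔
      ¬ Summable fun s => (1 - b s) ^ (n - 1) := by
  set m := n - 1 with hmdef
  have hm : 1 ≤ m := by omega
  have hb1 : ∀ s, b s ≤ 1 := fun s => (hb s).2
  have hble : ∀ s, (0:ℝ) ≤ b s := fun s => (hb s).1
  have hb0le : ∀ s, b 0 ≤ b s := fun s => hmono (Nat.zero_le s)
  have h1b : ∀ s, (0:ℝ) ≤ 1 - b s := fun s => by linarith [hb1 s]
  set a : ℕ → ℝ := fun k => ∏ s ∈ Finset.Ico (k * m) ((k + 1) * m), b s * (1 - b s)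
    with hadef
  set d : ℕ → ℝ := fun k => (1 - b (k * m)) ^ m with hddef
  set c : ℕ → ℝ := fun s => (1 - b s) ^ m with hcdef
  set C : ℕ → ℝ := fun k => ∑ s ∈ Finset.Ico (k * m) ((k + 1) * m), c s with hCdef
  have hcard : ∀ k : ℕ, (Finset.Ico (k * m) ((k + 1) * m)).card = m := fun k => by
    rw [Nat.card_Ico, add_one_mul, Nat.add_sub_cancel_left]
  have ha_nonneg : ∀ k, 0 ≤ a k := fun k =>
    Finset.prod_nonneg fun s _ => mul_nonneg (hble s) (h1b s)
  have hd_nonneg : ∀ k, 0 ≤ d k := fun k => pow_nonneg (h1b _) m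
  have hc_nonneg : ∀ s, 0 ≤ c s := fun s => pow_nonneg (h1b _) m
  have hC_nonneg : ∀ k, 0 ≤ C k := fun k => Finset.sum_nonneg fun s _ => hc_nonneg s
  -- (1) a k ≤ d k
  have h1 : ∀ k, a k ≤ d k := by
    intro k
    calc a k ≤ ∏ _s ∈ Finset.Ico (k * m) ((k + 1) * m), (1 - b (k * m)) := by
          apply Finset.prod_le_prod (fun s _ => mul_nonneg (hble s) (h1b s))
          intro s hs
          have h := hmono (Finset.mem_Ico.mp hs).1
          nlinarith [hble s, hb1 s, h1b s]
      _ = d k := by rw [Finset.prod_const, hcard]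
  -- (2) b 0 ^ m * d (k + 1) ≤ a k
  have h2 : ∀ k, b 0 ^ m * d (k + 1) ≤ a k := by
    intro k
    have key : (b 0 * (1 - b ((k + 1) * m))) ^ m ≤ a k := by
      calc (b 0 * (1 - b ((k + 1) * m))) ^ m
          = ∏ _s ∈ Finset.Ico (k * m) ((k + 1) * m), (b 0 * (1 - b ((k + 1) * m))) := by
            rw [Finset.prod_const, hcard]
        _ ≤ a k := by
            apply Finset.prod_le_prod (fun s _ => mul_nonneg hb0.le (h1b _))
            intro s hs
            have h := hmono (le_of_lt (Finset.mem_Ico.mp hs).2)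
            exact mul_le_mul (hb0le s) (by linarith) (h1b _) (hble s)
    calc b 0 ^ m * d (k + 1) = (b 0 * (1 - b ((k + 1) * m))) ^ m := by
          rw [mul_pow]
      _ ≤ a k := key
  -- (3) C k ≤ m * d k
  have h3 : ∀ k, C k ≤ (m : ℝ) * d k := by
    intro k
    calc C k ≤ ∑ _s ∈ Finset.Ico (k * m) ((k + 1) * m), (1 - b (k * m)) ^ m := by
          apply Finset.sum_le_sum
          intro s hs
          have h := hmono (Finset.mem_Ico.mp hs).1
          exact pow_le_pow_left₀ (h1b s) (by linarith) m
      _ = (m : ℝ) * d k := by rw [Finset.sum_const, hcard]; simp; exact Or.inl rfl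
  -- (4) m * d (k + 1) ≤ C k
  have h4 : ∀ k, (m : ℝ) * d (k + 1) ≤ C k := by
    intro k
    calc (m : ℝ) * d (k + 1)
        = ∑ _s ∈ Finset.Ico (k * m) ((k + 1) * m), (1 - b ((k + 1) * m)) ^ m := by
          rw [Finset.sum_const, hcard]; simp; exact Or.inl rfl
      _ ≤ C k := by
          apply Finset.sum_le_sum
          intro s hs
          have h := hmono (le_of_lt (Finset.mem_Ico.mp hs).2)
          exact pow_le_pow_left₀ (h1b _) (by linarith) m
  have hpos : (0:ℝ) < b 0 ^ m := pow_pos hb0 m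
  have hmpos : (0:ℝ) < (m : ℝ) := by exact_mod_cast hm
  -- Summable a ↔ Summable d
  have hiff1 : Summable a ↔ Summable d := by
    constructor
    · intro hA
      have hshift : Summable (fun k => d (k + 1)) := by
        apply Summable.of_nonneg_of_le (fun k => hd_nonneg _)
          (f := fun k => (b 0 ^ m)⁻¹ * a k) _ (hA.mul_left _)
        intro k
        calc d (k + 1) = (b 0 ^ m)⁻¹ * (b 0 ^ m * d (k + 1)) := by
              field_simp
          _ ≤ (b 0 ^ m)⁻¹ * a k :=
              mul_le_mul_of_nonneg_left (h2 k) (inv_nonneg.mpr hpos.le)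
      exact (summable_nat_add_iff 1).mp hshift
    · intro hD
      exact Summable.of_nonneg_of_le ha_nonneg h1 hD
  -- Summable C ↔ Summable d
  have hiff2 : Summable C ↔ Summable d := by
    constructor
    · intro hC
      have hshift : Summable (fun k => d (k + 1)) := by
        apply Summable.of_nonneg_of_le (fun k => hd_nonneg _)
          (f := fun k => ((m : ℝ))⁻¹ * C k) _ (hC.mul_left _)
        intro k
        calc d (k + 1) = ((m:ℝ))⁻¹ * ((m:ℝ) * d (k + 1)) := by
              field_simp
          _ ≤ ((m:ℝ))⁻¹ * C k :=
              mul_le_mul_of_nonneg_left (h4 k) (inv_nonneg.mpr hmpos.le)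
      exact (summable_nat_add_iff 1).mp hshift
    · intro hD
      exact Summable.of_nonneg_of_le hC_nonneg h3 (hD.mul_left _)
  have hiff3 : Summable c ↔ Summable C := block_summable_iff hc_nonneg hm
  exact not_iff_not.mpr (hiff1.trans ((hiff3.trans hiff2).symm))
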